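/- Let N, r, L be natural numbers with N ≥ 2, r ≥ 2 and L ≥ 2. If N^L · L! < (r^L + 1)!, then N^{L+1} · (L+1)! < (r^{L+1} + 1)!. -/

import Mathlib

/-- If `N^L · L! < (r^L + 1)!` with `N, r, L ≥ 2`, then
`N^(L+1) · (L+1)! < (r^(L+1) + 1)!`. -/
theorem stmt_13 (N r L : ℕ) (hN : 2 ≤ N) (hr : 2 ≤ r) (hL : 2 ≤ L)
    (h : N ^ L * Nat.factorial L < Nat.factorial (r ^ L + 1)) :
    N ^ (L + 1) * Nat.factorial (L + 1) < Nat.factorial (r ^ (L + 1) + 1) := by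
  set M := r ^ L with hM
  have h2L : 2 ^ L ≤ M := Nat.pow_le_pow_left hr L
  have hM4 : 4 ≤ M := le_trans (by calc (4:ℕ) = 2 ^ 2 := by norm_num
                                       _ ≤ 2 ^ L := Nat.pow_le_pow_right (by norm_num) hL) h2L
  have hLM : L + 1 ≤ M := le_trans (Nat.lt_two_pow_self (n := L)) h2L
  -- N^2 ≤ (M+2)^(M+1)
  have hN2 : N ^ 2 ≤ (M + 2) ^ (M + 1) := by
    calc N ^ 2 ≤ N ^ L := Nat.pow_le_pow_right (le_trans (by norm_num) hN) hL
      _ ≤ N ^ L * Nat.factorial L := Nat.le_mul_of_pos_right _ (Nat.factorial_pos L)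
      _ ≤ Nat.factorial (M + 1) := le_of_lt h
      _ ≤ (M + 1) ^ (M + 1) := Nat.factorial_le_pow _
      _ ≤ (M + 2) ^ (M + 1) := Nat.pow_le_pow_left (by omega) _
  -- key bound: N*(L+1) ≤ (M+2)^M
  have key1 : N * (L + 1) ≤ (M + 2) ^ M := by
    have hsq : (N * (L + 1)) ^ 2 ≤ ((M + 2) ^ M) ^ 2 := by
      calc (N * (L + 1)) ^ 2 = N ^ 2 * (L + 1) ^ 2 := by ring
        _ ≤ (M + 2) ^ (M + 1) * (M + 2) ^ 2 := by
            apply Nat.mul_le_mul hN2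
            exact Nat.pow_le_pow_left (by omega) 2
        _ = (M + 2) ^ (M + 3) := by rw [← pow_add]
        _ ≤ (M + 2) ^ (2 * M) := Nat.pow_le_pow_right (by omega) (by omega)
        _ = ((M + 2) ^ M) ^ 2 := by rw [← pow_mul, mul_comm]
    exact (Nat.pow_le_pow_iff_left (n := 2) (by norm_num)).mp hsq
  -- key bound: (M+1)! * (M+2)^M ≤ (r^(L+1)+1)!
  have hrM : M ≤ r ^ (L + 1) - M := by
    have h1 : r ^ (L + 1) = r * M := by rw [hM, pow_succ, mul_comm]
    have h2 : 2 * M ≤ r * M := Nat.mul_le_mul_right M hr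
    omega
  have key2 : Nat.factorial (M + 1) * (M + 2) ^ M ≤ Nat.factorial (r ^ (L + 1) + 1) := by
    calc Nat.factorial (M + 1) * (M + 2) ^ M
        ≤ Nat.factorial (M + 1) * (M + 2) ^ (r ^ (L + 1) - M) :=
          Nat.mul_le_mul_left _ (Nat.pow_le_pow_right (by omega) hrM)
      _ ≤ Nat.factorial (M + 1 + (r ^ (L + 1) - M)) := Nat.factorial_mul_pow_le_factorial
      _ = Nat.factorial (r ^ (L + 1) + 1) := by congr 1; omega
  calc N ^ (L + 1) * Nat.factorial (L + 1)
      = N * (L + 1) * (N ^ L * Nat.factorial L) := by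
        rw [pow_succ, Nat.factorial_succ]; ring
    _ < N * (L + 1) * Nat.factorial (M + 1) := by
        have hp : 0 < N * (L + 1) := by positivity
        exact mul_lt_mul_of_pos_left h hp
    _ ≤ (M + 2) ^ M * Nat.factorial (M + 1) := Nat.mul_le_mul_right _ key1
    _ = Nat.factorial (M + 1) * (M + 2) ^ M := mul_comm _ _
    _ ≤ Nat.factorial (r ^ (L + 1) + 1) := key2
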